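/- Let β ≥ 0 and let f : ℝ → ℝ be continuous on [−1, 1] with f(x) ≥ 1 − β·x²/2 for every x ∈ [−1, 1]. Then: (i) if β ≤ 2, one has ∫_{−1}^{1} f(x)² dx ≥ 1; and (ii) if β ≥ 2, one has ∫_{−1}^{1} f(x)² dx ≥ √(2/β). -/
import Mathlib


open Real Set intervalIntegral

lemma parabola_sq_integral (β c : ℝ) :
    (∫ x in (-c : ℝ)..c, (1 - β * x ^ 2 / 2) ^ 2)
      = 2 * c - 2 * β * c ^ 3 / 3 + β ^ 2 * c ^ 5 / 10 := by
  have h : ∀ x : ℝ, (1 - β * x ^ 2 / 2) ^ 2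
      = (1 - β * x ^ 2) + β ^ 2 / 4 * x ^ 4 := fun x => by ring
  simp_rw [h]
  rw [intervalIntegral.integral_add ((by continuity : Continuous fun x : ℝ => 1 - β * x ^ 2).intervalIntegrable _ _) ((by continuity : Continuous fun x : ℝ => β ^ 2 / 4 * x ^ 4).intervalIntegrable _ _),
      intervalIntegral.integral_sub ((by continuity : Continuous fun _ : ℝ => (1:ℝ)).intervalIntegrable _ _) ((by continuity : Continuous fun x : ℝ => β * x ^ 2).intervalIntegrable _ _),
      intervalIntegral.integral_const_mul, intervalIntegral.integral_const_mul,
      integral_pow, integral_pow, integral_const]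
  simp; ring

/-- **L2-norm lower bound for functions dominating the parabola `1 - βx²/2`.**
If `f` is continuous on `[-1, 1]` and `f(x) ≥ 1 - βx²/2` there, then
`∫_{-1}^{1} f(x)² dx ≥ 1` for `β ≤ 2`, and `∫_{-1}^{1} f(x)² dx ≥ √(2/β)`
for `β ≥ 2`. -/
theorem filling_fraction_lower_bound (β : ℝ) (hβ : 0 ≤ β) (f : ℝ → ℝ)
    (hf : ContinuousOn f (Set.Icc (-1 : ℝ) 1))
    (hlb : ∀ x ∈ Set.Icc (-1 : ℝ) 1, 1 - β * x ^ 2 / 2 ≤ f x) :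
    (β ≤ 2 → 1 ≤ ∫ x in (-1 : ℝ)..1, f x ^ 2) ∧
    (2 ≤ β → Real.sqrt (2 / β) ≤ ∫ x in (-1 : ℝ)..1, f x ^ 2) := by
  have huIcc : Set.uIcc (-1 : ℝ) 1 = Set.Icc (-1 : ℝ) 1 :=
    Set.uIcc_of_le (by norm_num)
  have hint : IntervalIntegrable (fun x => f x ^ 2) MeasureTheory.volume (-1) 1 := by
    apply ContinuousOn.intervalIntegrable
    rw [huIcc]
    exact hf.pow 2
  have hgint : ∀ c d : ℝ, IntervalIntegrable (fun x => (1 - β * x ^ 2 / 2) ^ 2)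
      MeasureTheory.volume c d := fun c d =>
    (by continuity : Continuous fun x : ℝ => (1 - β * x ^ 2 / 2) ^ 2).intervalIntegrable _ _
  constructor
  · intro hβ2
    have hg : ∀ x ∈ Set.Icc (-1 : ℝ) 1, (1 - β * x ^ 2 / 2) ^ 2 ≤ f x ^ 2 := by
      intro x hx
      have hx2 : x ^ 2 ≤ 1 := by nlinarith [hx.1, hx.2]
      have h1 : 0 ≤ 1 - β * x ^ 2 / 2 := by nlinarith [sq_nonneg x]
      have h2 := hlb x hx
      nlinarith
    have mono := intervalIntegral.integral_mono_on (by norm_num : (-1:ℝ) ≤ 1)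
      (hgint (-1) 1) hint hg
    have hcalc := parabola_sq_integral β 1
    norm_num at hcalc
    nlinarith [mono]
  · intro hβ2
    have hβpos : (0:ℝ) < β := lt_of_lt_of_le two_pos hβ2
    set a := Real.sqrt (2 / β) with ha
    have ha0 : 0 < a := Real.sqrt_pos.mpr (by positivity)
    have ha2 : a ^ 2 = 2 / β := Real.sq_sqrt (by positivity)
    have hba2 : β * a ^ 2 = 2 := by
      rw [ha2]; field_simp
    have ha1 : a ≤ 1 := by
      rw [ha, show (1:ℝ) = Real.sqrt 1 by simp]
      apply Real.sqrt_le_sqrt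
      rw [div_le_one hβpos]; exact hβ2
    have hsub : ∀ c d : ℝ, -1 ≤ c → c ≤ d → d ≤ 1 →
        IntervalIntegrable (fun x => f x ^ 2) MeasureTheory.volume c d := by
      intro c d h1 h2 h3
      refine hint.mono_set ?_
      rw [huIcc, Set.uIcc_of_le h2]
      exact Set.Icc_subset_Icc h1 h3
    have hna : (-1 : ℝ) ≤ -a := by linarith
    have hsplit : (∫ x in (-1 : ℝ)..1, f x ^ 2)
        = (∫ x in (-1 : ℝ)..(-a), f x ^ 2) + (∫ x in (-a)..a, f x ^ 2)
          + (∫ x in a..(1 : ℝ), f x ^ 2) := by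
      rw [intervalIntegral.integral_add_adjacent_intervals
            (hsub (-1) (-a) le_rfl hna (by linarith)) (hsub (-a) a hna (by linarith) ha1),
          intervalIntegral.integral_add_adjacent_intervals
            (hsub (-1) a le_rfl (by linarith) ha1) (hsub a 1 (by linarith) ha1 le_rfl)]
    have hleft : 0 ≤ ∫ x in (-1 : ℝ)..(-a), f x ^ 2 :=
      intervalIntegral.integral_nonneg (by linarith) (fun x _ => sq_nonneg _)
    have hright : 0 ≤ ∫ x in a..(1 : ℝ), f x ^ 2 :=
      intervalIntegral.integral_nonneg ha1 (fun x _ => sq_nonneg _)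
    have hg : ∀ x ∈ Set.Icc (-a) a, (1 - β * x ^ 2 / 2) ^ 2 ≤ f x ^ 2 := by
      intro x hx
      have hx1 : x ∈ Set.Icc (-1 : ℝ) 1 := ⟨by linarith [hx.1], by linarith [hx.2]⟩
      have hx2 : x ^ 2 ≤ a ^ 2 := by nlinarith [hx.1, hx.2]
      have h1 : 0 ≤ 1 - β * x ^ 2 / 2 := by nlinarith [mul_le_mul_of_nonneg_left hx2 hβ]
      have h2 := hlb x hx1
      nlinarith
    have mono := intervalIntegral.integral_mono_on (by linarith : (-a : ℝ) ≤ a)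
      (hgint (-a) a) (hsub (-a) a hna (by linarith) ha1) hg
    have hcalc := parabola_sq_integral β a
    have e1 : β * a ^ 3 = 2 * a := by linear_combination a * hba2
    have e2 : β ^ 2 * a ^ 5 = 4 * a := by
      linear_combination a * (β * a ^ 2 + 2) * hba2
    rw [hcalc] at mono
    rw [hsplit]
    nlinarith [mono]
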